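/- arXiv:2412.11595 — 2 statements merged into one kernel-verified Lean document; each statement's English description precedes it below -/
import Mathlib

section
/- Let ι and κ be finite nonempty index types, and let ρ : Matrix ι ι ℂ and σ : Matrix κ κ ℂ be positive definite Hermitian matrices with Matrix.trace ρ = 1 and Matrix.trace σ = 1. Then the von Neumann entropy is additive over the Kronecker product: S(ρ ⊗ₖ σ) = S(ρ) + S(σ). -/
open Matrix Kronecker Polynomial
open scoped ComplexOrder

/-- `matLog ρ` is `Real.log` applied to a Hermitian matrix `ρ` through the
continuous functional calculus (`Matrix.IsHermitian.cfc`); junk value `0` on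
non-Hermitian matrices. -/
noncomputable def matLog {n : Type*} [Fintype n] [DecidableEq n]
    (ρ : Matrix n n ℂ) : Matrix n n ℂ :=
  if h : ρ.IsHermitian then h.cfc Real.log else 0

/-- The von Neumann entropy `S(ρ) = -Re (tr (ρ log ρ))`. -/
noncomputable def vnEntropy {n : Type*} [Fintype n] [DecidableEq n]
    (ρ : Matrix n n ℂ) : ℝ :=
  -(Matrix.trace (ρ * matLog ρ)).re

/-- The quantum relative entropy `S(ρ‖σ) = Re (tr (ρ (log ρ - log σ)))`. -/
noncomputable def relEnt {n : Type*} [Fintype n] [DecidableEq n]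
    (ρ σ : Matrix n n ℂ) : ℝ :=
  (Matrix.trace (ρ * (matLog ρ - matLog σ))).re

/-- Partial trace over the second tensor factor. -/
noncomputable def ptr₂ {ι κ : Type*} [Fintype κ]
    (M : Matrix (ι × κ) (ι × κ) ℂ) : Matrix ι ι ℂ :=
  Matrix.of fun i i' => ∑ k, M (i, k) (i', k)

/-- Partial trace over the first tensor factor. -/
noncomputable def ptr₁ {ι κ : Type*} [Fintype ι]
    (M : Matrix (ι × κ) (ι × κ) ℂ) : Matrix κ κ ℂ :=
  Matrix.of fun k k' => ∑ i, M (i, k) (i, k')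

section aux
variable {n : Type*} [Fintype n] [DecidableEq n]

lemma charpoly_diagonal_aux (v : n → ℂ) :
    (Matrix.diagonal v).charpoly = ∏ i, (X - C (v i)) := by
  have h : charmatrix (Matrix.diagonal v)
      = Matrix.diagonal fun i => (X : ℂ[X]) - C (v i) := by
    ext i j
    by_cases hij : i = j
    · subst hij; simp
    · rw [charmatrix_apply_ne _ _ _ hij, Matrix.diagonal_apply_ne _ hij,
        Matrix.diagonal_apply_ne _ hij]
      simp
  rw [Matrix.charpoly, h, Matrix.det_diagonal]

lemma charpoly_unitary_conj (W M : Matrix n n ℂ) (hW : W ∈ Matrix.unitaryGroup n ℂ) :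
    (W * M * star W).charpoly = M.charpoly := by
  have h1 : W * star W = 1 := Matrix.mem_unitaryGroup_iff.mp hW
  have hmap : ∀ P Q : Matrix n n ℂ, (P * Q).map (C : ℂ →+* ℂ[X])
      = P.map C * Q.map C := fun P Q => by
    simpa [RingHom.mapMatrix_apply] using map_mul ((C : ℂ →+* ℂ[X]).mapMatrix) P Q
  have key : charmatrix (W * M * star W)
      = W.map C * charmatrix M * (star W).map C := by
    have hscal : W.map C * Matrix.scalar n (X : ℂ[X]) * (star W).map C
        = Matrix.scalar n (X : ℂ[X]) := by
      rw [(Matrix.scalar_commute (X : ℂ[X]) (fun r => Commute.all _ _) (W.map C)).symm.eq,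
        mul_assoc, ← hmap, h1]
      simp
    unfold charmatrix
    simp only [RingHom.mapMatrix_apply]
    rw [Matrix.mul_sub, Matrix.sub_mul, hscal, ← hmap, ← hmap]
  unfold Matrix.charpoly
  rw [key, Matrix.det_mul, Matrix.det_mul, mul_comm, ← mul_assoc, ← Matrix.det_mul,
    ← hmap, Matrix.mem_unitaryGroup_iff'.mp hW]
  simp

lemma roots_prod_linear (c : n → ℂ) :
    (∏ i, (X - C (c i))).roots = Finset.univ.val.map c := by
  rw [Finset.prod_eq_multiset_prod]
  have h : Multiset.map (fun i => X - C (c i)) Finset.univ.val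
      = Multiset.map (fun a => X - C a) (Multiset.map c Finset.univ.val) := by
    rw [Multiset.map_map]; rfl
  rw [h, roots_multiset_prod_X_sub_C]

lemma sum_eigenvalues_conj (A : Matrix n n ℂ) (hA : A.IsHermitian)
    (W : Matrix n n ℂ) (hW : W ∈ Matrix.unitaryGroup n ℂ) (d : n → ℝ)
    (hAd : A = W * Matrix.diagonal (fun i => ((d i : ℝ) : ℂ)) * star W)
    (g : ℝ → ℂ) : ∑ i, g (hA.eigenvalues i) = ∑ i, g (d i) := by
  have hU : (hA.eigenvectorUnitary : Matrix n n ℂ) ∈ Matrix.unitaryGroup n ℂ :=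
    hA.eigenvectorUnitary.2
  have h1 : A.charpoly = ∏ i, (X - C ((d i : ℂ))) := by
    conv_lhs => rw [hAd]
    rw [charpoly_unitary_conj _ _ hW, charpoly_diagonal_aux]
  have h2 : A.charpoly = ∏ i, (X - C ((hA.eigenvalues i : ℂ))) := by
    conv_lhs => rw [hA.spectral_theorem]
    rw [Unitary.conjStarAlgAut_apply, charpoly_unitary_conj _ _ hU, charpoly_diagonal_aux]
    rfl
  have hroots : Finset.univ.val.map (fun i => ((hA.eigenvalues i : ℝ) : ℂ))
      = Finset.univ.val.map (fun i => ((d i : ℝ) : ℂ)) := by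
    rw [← roots_prod_linear, ← roots_prod_linear, ← h1, ← h2]
  have hre : Finset.univ.val.map hA.eigenvalues = Finset.univ.val.map d := by
    have := congrArg (Multiset.map Complex.re) hroots
    simpa [Multiset.map_map, Function.comp_def] using this
  calc ∑ i, g (hA.eigenvalues i)
      = ((Finset.univ.val.map hA.eigenvalues).map g).sum := by
        rw [Multiset.map_map]; rfl
    _ = ((Finset.univ.val.map d).map g).sum := by rw [hre]
    _ = ∑ i, g (d i) := by rw [Multiset.map_map]; rfl

lemma mul_eigenvectorUnitary (A : Matrix n n ℂ) (hA : A.IsHermitian) :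
    A * (hA.eigenvectorUnitary : Matrix n n ℂ)
      = (hA.eigenvectorUnitary : Matrix n n ℂ)
        * Matrix.diagonal (RCLike.ofReal ∘ hA.eigenvalues) := by
  have hU : star (hA.eigenvectorUnitary : Matrix n n ℂ)
      * (hA.eigenvectorUnitary : Matrix n n ℂ) = 1 :=
    Matrix.mem_unitaryGroup_iff'.mp hA.eigenvectorUnitary.2
  have h2 := congrArg (fun X => X * (hA.eigenvectorUnitary : Matrix n n ℂ))
    hA.spectral_theorem
  simp only [Unitary.conjStarAlgAut_apply] at h2
  rw [mul_assoc _ (star (hA.eigenvectorUnitary : Matrix n n ℂ)), hU, mul_one] at h2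
  exact h2

lemma trace_mul_cfc (A : Matrix n n ℂ) (hA : A.IsHermitian) (f : ℝ → ℝ) :
    Matrix.trace (A * hA.cfc f)
      = ∑ i, ((hA.eigenvalues i : ℂ) * (f (hA.eigenvalues i) : ℂ)) := by
  have hU : star (hA.eigenvectorUnitary : Matrix n n ℂ)
      * (hA.eigenvectorUnitary : Matrix n n ℂ) = 1 :=
    Matrix.mem_unitaryGroup_iff'.mp hA.eigenvectorUnitary.2
  rw [Matrix.IsHermitian.cfc]
  simp only [Unitary.conjStarAlgAut_apply, ← mul_assoc]
  rw [mul_eigenvectorUnitary A hA, Matrix.trace_mul_comm]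
  simp only [← mul_assoc]
  rw [hU, one_mul, Matrix.diagonal_mul_diagonal, Matrix.trace_diagonal]
  rfl

lemma trace_eq_sum_eigs (A : Matrix n n ℂ) (hA : A.IsHermitian) :
    Matrix.trace A = ∑ i, ((hA.eigenvalues i : ℝ) : ℂ) := by
  have hU : star (hA.eigenvectorUnitary : Matrix n n ℂ)
      * (hA.eigenvectorUnitary : Matrix n n ℂ) = 1 :=
    Matrix.mem_unitaryGroup_iff'.mp hA.eigenvectorUnitary.2
  have hU' : (hA.eigenvectorUnitary : Matrix n n ℂ)
      * star (hA.eigenvectorUnitary : Matrix n n ℂ) = 1 :=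
    Matrix.mem_unitaryGroup_iff.mp hA.eigenvectorUnitary.2
  calc Matrix.trace A
      = Matrix.trace (A * (hA.eigenvectorUnitary : Matrix n n ℂ)
          * star (hA.eigenvectorUnitary : Matrix n n ℂ)) := by
        rw [mul_assoc, hU', mul_one]
    _ = ∑ i, ((hA.eigenvalues i : ℝ) : ℂ) := by
        rw [mul_eigenvectorUnitary A hA, Matrix.trace_mul_comm, ← mul_assoc, hU, one_mul,
          Matrix.trace_diagonal]
        rfl

end aux

section aux2
variable {n : Type*} [Fintype n] [DecidableEq n]

lemma vnEntropy_eq (A : Matrix n n ℂ) (hA : A.IsHermitian) :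
    vnEntropy A = -∑ i, hA.eigenvalues i * Real.log (hA.eigenvalues i) := by
  rw [vnEntropy, matLog, dif_pos hA, trace_mul_cfc A hA]
  simp [← Complex.ofReal_mul]

end aux2

section kron
variable {ι κ : Type*} [Fintype ι] [Fintype κ] [DecidableEq ι] [DecidableEq κ]

lemma kron_conjTranspose (A : Matrix ι ι ℂ) (B : Matrix κ κ ℂ) :
    (A ⊗ₖ B)ᴴ = Aᴴ ⊗ₖ Bᴴ := by
  ext ⟨i, j⟩ ⟨i', j'⟩
  exact star_mul' _ _

lemma kron_isHermitian {A : Matrix ι ι ℂ} {B : Matrix κ κ ℂ}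
    (hA : A.IsHermitian) (hB : B.IsHermitian) : (A ⊗ₖ B).IsHermitian := by
  unfold Matrix.IsHermitian
  rw [kron_conjTranspose, hA.eq, hB.eq]

end kron


/-- Additivity of the von Neumann entropy over Kronecker products:
`S(ρ ⊗ₖ σ) = S(ρ) + S(σ)`. -/
theorem vnEntropy_kronecker {ι κ : Type*} [Fintype ι] [Fintype κ]
    [DecidableEq ι] [DecidableEq κ] [Nonempty ι] [Nonempty κ]
    (ρ : Matrix ι ι ℂ) (σ : Matrix κ κ ℂ) (hρ : ρ.PosDef) (hσ : σ.PosDef)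
    (hρ1 : Matrix.trace ρ = 1) (hσ1 : Matrix.trace σ = 1) :
    vnEntropy (ρ ⊗ₖ σ) = vnEntropy ρ + vnEntropy σ := by
  have hρH := hρ.1
  have hσH := hσ.1
  set U := (hρH.eigenvectorUnitary : Matrix ι ι ℂ) with hUdef
  set V := (hσH.eigenvectorUnitary : Matrix κ κ ℂ) with hVdef
  have hUu : star U * U = 1 := Matrix.mem_unitaryGroup_iff'.mp hρH.eigenvectorUnitary.2
  have hVu : star V * V = 1 := Matrix.mem_unitaryGroup_iff'.mp hσH.eigenvectorUnitary.2
  have hT : (ρ ⊗ₖ σ).IsHermitian := kron_isHermitian hρH hσH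
  set W := U ⊗ₖ V with hWdef
  have hstarW : star W = star U ⊗ₖ star V := kron_conjTranspose U V
  have hWu : W ∈ Matrix.unitaryGroup (ι × κ) ℂ := by
    rw [Matrix.mem_unitaryGroup_iff']
    rw [hstarW, hWdef, ← Matrix.mul_kronecker_mul, hUu, hVu, Matrix.one_kronecker_one]
  have hdecomp : ρ ⊗ₖ σ = W * Matrix.diagonal
      (fun p : ι × κ => ((hρH.eigenvalues p.1 * hσH.eigenvalues p.2 : ℝ) : ℂ)) * star W := by
    have h1 := congrArg₂ (fun (X : Matrix ι ι ℂ) (Y : Matrix κ κ ℂ) => X ⊗ₖ Y)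
      hρH.spectral_theorem hσH.spectral_theorem
    simp only [Unitary.conjStarAlgAut_apply] at h1
    rw [Matrix.mul_kronecker_mul, Matrix.mul_kronecker_mul,
      Matrix.diagonal_kronecker_diagonal] at h1
    rw [h1, hstarW, hWdef]
    congr 1
    congr 1
    apply congrArg Matrix.diagonal
    funext p
    exact (Complex.ofReal_mul _ _).symm
  have hsum : ∑ p : ι × κ, hT.eigenvalues p * Real.log (hT.eigenvalues p)
      = ∑ p : ι × κ, (hρH.eigenvalues p.1 * hσH.eigenvalues p.2)
          * Real.log (hρH.eigenvalues p.1 * hσH.eigenvalues p.2) := by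
    have h := sum_eigenvalues_conj _ hT W hWu _ hdecomp
      (fun x : ℝ => ((x * Real.log x : ℝ) : ℂ))
    exact_mod_cast h
  have hl1 : ∑ i, hρH.eigenvalues i = 1 := by
    have h := (trace_eq_sum_eigs ρ hρH).symm.trans hρ1
    exact_mod_cast h
  have hm1 : ∑ j, hσH.eigenvalues j = 1 := by
    have h := (trace_eq_sum_eigs σ hσH).symm.trans hσ1
    exact_mod_cast h
  rw [vnEntropy_eq _ hT, vnEntropy_eq _ hρH, vnEntropy_eq _ hσH, hsum,
    Fintype.sum_prod_type]
  have hexp : ∀ (i : ι) (j : κ),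
      (hρH.eigenvalues i * hσH.eigenvalues j)
        * Real.log (hρH.eigenvalues i * hσH.eigenvalues j)
      = (hρH.eigenvalues i * Real.log (hρH.eigenvalues i)) * hσH.eigenvalues j
        + hρH.eigenvalues i * (hσH.eigenvalues j * Real.log (hσH.eigenvalues j)) := by
    intro i j
    rw [Real.log_mul (ne_of_gt (hρ.eigenvalues_pos i)) (ne_of_gt (hσ.eigenvalues_pos j))]
    ring
  simp_rw [hexp]
  simp only [Finset.sum_add_distrib, ← Finset.mul_sum, ← Finset.sum_mul, hm1, hl1,
    mul_one, one_mul]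
  ring
end

section
/- Let ι and κ be finite nonempty index types, let ρ : Matrix (ι × κ) (ι × κ) ℂ be a positive definite Hermitian matrix with Matrix.trace ρ = 1 whose marginals ρ_A := ptr₂ ρ and ρ_B := ptr₁ ρ are positive definite, and let σ_A : Matrix ι ι ℂ and σ_B : Matrix κ κ ℂ be positive definite Hermitian matrices with trace 1. Then the total relative entropy to the product σ_A ⊗ₖ σ_B decomposes as S(ρ ‖ σ_A ⊗ₖ σ_B) = S(ρ ‖ ρ_A ⊗ₖ ρ_B) + S(ρ_A ‖ σ_A) + S(ρ_B ‖ σ_B). -/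
open Matrix Kronecker
open scoped ComplexOrder

section Aux
open Polynomial

variable {n : Type*} [Fintype n] [DecidableEq n]

/-- Conjugation by a unitary matrix, as an `ℝ`-algebra homomorphism. -/
noncomputable def conjAlgHom (U : Matrix.unitaryGroup n ℂ) :
    Matrix n n ℂ →ₐ[ℝ] Matrix n n ℂ where
  toFun M := U.1 * M * star U.1
  map_one' := by show U.1 * 1 * star U.1 = 1; rw [mul_one, U.2.2]
  map_mul' M N := by
    have h : star U.1 * U.1 = 1 := U.2.1
    show U.1 * (M * N) * star U.1 = U.1 * M * star U.1 * (U.1 * N * star U.1)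
    calc U.1 * (M * N) * star U.1
        = U.1 * M * (star U.1 * U.1) * N * star U.1 := by rw [h]; noncomm_ring
      _ = U.1 * M * star U.1 * (U.1 * N * star U.1) := by noncomm_ring
  map_zero' := by show U.1 * 0 * star U.1 = 0; simp
  map_add' M N := by show U.1 * (M + N) * star U.1 = U.1 * M * star U.1 + U.1 * N * star U.1; noncomm_ring
  commutes' r := by
    show U.1 * algebraMap ℝ (Matrix n n ℂ) r * star U.1 = algebraMap ℝ (Matrix n n ℂ) r
    simp only [Algebra.algebraMap_eq_smul_one, Matrix.smul_mul, Matrix.mul_smul, mul_one, U.2.2]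

lemma conj_diag_aeval (U : Matrix.unitaryGroup n ℂ) (d : n → ℝ) (p : ℝ[X]) :
    aeval (U.1 * Matrix.diagonal (fun i => (d i : ℂ)) * star U.1) p
      = U.1 * Matrix.diagonal (fun i => ((p.eval (d i) : ℝ) : ℂ)) * star U.1 := by
  have h1 : U.1 * Matrix.diagonal (fun i => (d i : ℂ)) * star U.1
      = conjAlgHom U ((Matrix.diagonalAlgHom ℝ) (fun i => (d i : ℂ))) := rfl
  have h2 : (aeval (fun i => (d i : ℂ)) p : n → ℂ) = fun i => ((p.eval (d i) : ℝ) : ℂ) := by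
    funext i
    calc (aeval (fun j => (d j : ℂ)) p : n → ℂ) i
        = (Pi.evalAlgHom ℝ (fun _ : n => ℂ) i) (aeval (fun j => (d j : ℂ)) p) := rfl
      _ = aeval ((d i : ℂ)) p := (Polynomial.aeval_algHom_apply _ _ _).symm
      _ = aeval (algebraMap ℝ ℂ (d i)) p := by norm_num
      _ = algebraMap ℝ ℂ (p.eval (d i)) :=
          Polynomial.aeval_algebraMap_apply_eq_algebraMap_eval _ _
      _ = _ := by norm_num
  rw [h1, Polynomial.aeval_algHom_apply, Polynomial.aeval_algHom_apply, h2]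
  rfl

lemma spectrum_conj_diag (U : Matrix.unitaryGroup n ℂ) (d : n → ℝ) :
    spectrum ℝ (U.1 * Matrix.diagonal (fun i => (d i : ℂ)) * star U.1) = Set.range d := by
  ext x
  rw [Unitary.spectrum_star_right_conjugate (U := U), ← spectrum.algebraMap_mem_iff ℂ,
    spectrum_diagonal]
  constructor
  · rintro ⟨i, hi⟩
    exact ⟨i, Complex.ofReal_injective (by simpa using hi)⟩
  · rintro ⟨i, hi⟩
    exact ⟨i, by simp [hi]⟩

lemma cfc_conj_diag (U : Matrix.unitaryGroup n ℂ) (d : n → ℝ) (f : ℝ → ℝ)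
    (hA : Matrix.IsHermitian (U.1 * Matrix.diagonal (fun i => (d i : ℂ)) * star U.1)) :
    hA.cfc f = U.1 * Matrix.diagonal (fun i => ((f (d i) : ℝ) : ℂ)) * star U.1 := by
  set A := U.1 * Matrix.diagonal (fun i => (d i : ℂ)) * star U.1 with hAdef
  have hrange : ∀ j, hA.eigenvalues j ∈ Set.range d := by
    intro j
    rw [← spectrum_conj_diag U d, ← hAdef, hA.spectrum_real_eq_range_eigenvalues]
    exact ⟨j, rfl⟩
  set s : Finset ℝ := Finset.image d Finset.univ with hs
  set p : ℝ[X] := Lagrange.interpolate s id f with hp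
  have hinj : Set.InjOn (id : ℝ → ℝ) s := Function.injective_id.injOn
  have heval : ∀ x ∈ Set.range d, p.eval x = f x := by
    rintro - ⟨i, rfl⟩
    exact Lagrange.eval_interpolate_at_node f hinj (by simp [hs])
  have hspec : A = (hA.eigenvectorUnitary : Matrix n n ℂ) *
      Matrix.diagonal (fun i => (hA.eigenvalues i : ℂ)) *
      star (hA.eigenvectorUnitary : Matrix n n ℂ) := by
    convert hA.spectral_theorem using 2
    rfl
  have step1 : hA.cfc f = hA.cfc (fun x => p.eval x) := by
    unfold Matrix.IsHermitian.cfc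
    have h : (RCLike.ofReal ∘ f ∘ hA.eigenvalues : n → ℂ)
        = RCLike.ofReal ∘ (fun x => p.eval x) ∘ hA.eigenvalues := by
      funext i
      simp only [Function.comp_apply]
      rw [heval _ (hrange i)]
    rw [h]
  have step2 : hA.cfc (fun x => p.eval x) = Polynomial.aeval A p := by
    conv_rhs => rw [hspec]
    rw [conj_diag_aeval hA.eigenvectorUnitary hA.eigenvalues p]
    rfl
  have step3 := conj_diag_aeval U d p
  rw [← hAdef] at step3
  have h4 : (fun i => ((p.eval (d i) : ℝ) : ℂ)) = fun i => ((f (d i) : ℝ) : ℂ) := by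
    funext i
    rw [heval _ ⟨i, rfl⟩]
  rw [step1, step2, step3, h4]

lemma star_kronecker {ι κ : Type*} (A : Matrix ι ι ℂ) (B : Matrix κ κ ℂ) :
    star (A ⊗ₖ B) = star A ⊗ₖ star B := by
  ext ⟨i, k⟩ ⟨i', k'⟩
  simp [Matrix.conjTranspose_apply, Matrix.kroneckerMap_apply]

/-- Kronecker product of unitary matrices is unitary. -/
noncomputable def kronUnitary {ι κ : Type*} [Fintype ι] [Fintype κ] [DecidableEq ι]
    [DecidableEq κ] (U : Matrix.unitaryGroup ι ℂ) (V : Matrix.unitaryGroup κ ℂ) :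
    Matrix.unitaryGroup (ι × κ) ℂ :=
  ⟨U.1 ⊗ₖ V.1, by
    rw [Matrix.mem_unitaryGroup_iff, star_kronecker, ← Matrix.mul_kronecker_mul,
      U.2.2, V.2.2, Matrix.one_kronecker_one]⟩


lemma matLog_conj_diag (U : Matrix.unitaryGroup n ℂ) (d : n → ℝ)
    (hA : Matrix.IsHermitian (U.1 * Matrix.diagonal (fun i => (d i : ℂ)) * star U.1)) :
    matLog (U.1 * Matrix.diagonal (fun i => (d i : ℂ)) * star U.1)
      = U.1 * Matrix.diagonal (fun i => ((Real.log (d i) : ℝ) : ℂ)) * star U.1 := by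
  rw [matLog, dif_pos hA, cfc_conj_diag]

lemma matLog_posDef {A : Matrix n n ℂ} (hA : A.PosDef) :
    matLog A = (hA.1.eigenvectorUnitary : Matrix n n ℂ) *
      Matrix.diagonal (fun i => ((Real.log (hA.1.eigenvalues i) : ℝ) : ℂ)) *
      star (hA.1.eigenvectorUnitary : Matrix n n ℂ) := by
  have hspec : A = (hA.1.eigenvectorUnitary : Matrix n n ℂ) *
      Matrix.diagonal (fun i => (hA.1.eigenvalues i : ℂ)) *
      star (hA.1.eigenvectorUnitary : Matrix n n ℂ) := by
    convert hA.1.spectral_theorem using 2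
    rfl
  conv_lhs => rw [hspec]
  exact matLog_conj_diag hA.1.eigenvectorUnitary hA.1.eigenvalues (hspec ▸ hA.1)

lemma matLog_kronecker {ι κ : Type*} [Fintype ι] [Fintype κ] [DecidableEq ι] [DecidableEq κ]
    (A : Matrix ι ι ℂ) (B : Matrix κ κ ℂ) (hA : A.PosDef) (hB : B.PosDef) :
    matLog (A ⊗ₖ B) = matLog A ⊗ₖ (1 : Matrix κ κ ℂ) + (1 : Matrix ι ι ℂ) ⊗ₖ matLog B := by
  set U := hA.1.eigenvectorUnitary
  set V := hB.1.eigenvectorUnitary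
  set a := hA.1.eigenvalues
  set b := hB.1.eigenvalues
  set W := kronUnitary U V with hW
  have hspecA : A = (U : Matrix ι ι ℂ) * Matrix.diagonal (fun i => (a i : ℂ)) *
      star (U : Matrix ι ι ℂ) := by convert hA.1.spectral_theorem using 2; rfl
  have hspecB : B = (V : Matrix κ κ ℂ) * Matrix.diagonal (fun k => (b k : ℂ)) *
      star (V : Matrix κ κ ℂ) := by convert hB.1.spectral_theorem using 2; rfl
  have hkron : A ⊗ₖ B = W.1 * Matrix.diagonal (fun ik : ι × κ => ((a ik.1 * b ik.2 : ℝ) : ℂ))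
      * star W.1 := by
    conv_lhs => rw [hspecA, hspecB]
    rw [hW]
    show _ = (U.1 ⊗ₖ V.1) * _ * star (U.1 ⊗ₖ V.1)
    rw [star_kronecker, Matrix.mul_kronecker_mul, Matrix.mul_kronecker_mul,
      Matrix.diagonal_kronecker_diagonal]
    congr 2
    funext ik
    push_cast
    ring
  have hdiagherm : Matrix.IsHermitian (Matrix.diagonal
      (fun ik : ι × κ => ((a ik.1 * b ik.2 : ℝ) : ℂ))) := by
    apply Matrix.isHermitian_diagonal_of_self_adjoint
    funext ik
    simp [Pi.star_apply, ← Complex.ofReal_mul]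
  have hherm : Matrix.IsHermitian (W.1 * Matrix.diagonal
      (fun ik : ι × κ => ((a ik.1 * b ik.2 : ℝ) : ℂ)) * star W.1) := by
    rw [Matrix.star_eq_conjTranspose]
    exact Matrix.isHermitian_mul_mul_conjTranspose _ hdiagherm
  rw [hkron, matLog_conj_diag W _ hherm]
  have hlog : (fun ik : ι × κ => ((Real.log (a ik.1 * b ik.2) : ℝ) : ℂ))
      = fun ik : ι × κ => ((Real.log (a ik.1) : ℝ) : ℂ) + ((Real.log (b ik.2) : ℝ) : ℂ) := by
    funext ik
    rw [Real.log_mul (ne_of_gt (hA.eigenvalues_pos ik.1)) (ne_of_gt (hB.eigenvalues_pos ik.2))]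
    push_cast
    ring
  have hdiagsplit : Matrix.diagonal (fun ik : ι × κ => ((Real.log (a ik.1 * b ik.2) : ℝ) : ℂ))
      = Matrix.diagonal (fun i => ((Real.log (a i) : ℝ) : ℂ)) ⊗ₖ (1 : Matrix κ κ ℂ)
        + (1 : Matrix ι ι ℂ) ⊗ₖ Matrix.diagonal (fun k => ((Real.log (b k) : ℝ) : ℂ)) := by
    rw [hlog, ← Matrix.diagonal_one, ← Matrix.diagonal_one, Matrix.diagonal_kronecker_diagonal,
      Matrix.diagonal_kronecker_diagonal, ← Matrix.diagonal_add]
    congr 1 <;> (funext ik; simp)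
  rw [hdiagsplit]
  show (U.1 ⊗ₖ V.1) * _ * star (U.1 ⊗ₖ V.1) = _
  rw [star_kronecker, Matrix.mul_add, Matrix.add_mul, ← Matrix.mul_kronecker_mul,
    ← Matrix.mul_kronecker_mul, ← Matrix.mul_kronecker_mul, ← Matrix.mul_kronecker_mul]
  have hV1 : V.1 * 1 * star V.1 = 1 := by rw [mul_one, V.2.2]
  have hU1 : U.1 * 1 * star U.1 = 1 := by rw [mul_one, U.2.2]
  rw [hV1, hU1, matLog_posDef hA, matLog_posDef hB]

lemma trace_mul_kron_one {ι κ : Type*} [Fintype ι] [Fintype κ] [DecidableEq κ]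
    (ρ : Matrix (ι × κ) (ι × κ) ℂ) (X : Matrix ι ι ℂ) :
    Matrix.trace (ρ * (X ⊗ₖ (1 : Matrix κ κ ℂ))) = Matrix.trace (ptr₂ ρ * X) := by
  simp only [Matrix.trace, Matrix.diag, Matrix.mul_apply, ptr₂, Matrix.of_apply,
    Matrix.kroneckerMap_apply, Matrix.one_apply, Fintype.sum_prod_type, mul_ite, mul_one,
    mul_zero, Finset.sum_ite_eq', Finset.mem_univ, if_true, Finset.sum_mul]
  exact Finset.sum_congr rfl fun i _ => Finset.sum_comm

lemma trace_mul_one_kron {ι κ : Type*} [Fintype ι] [Fintype κ] [DecidableEq ι]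
    (ρ : Matrix (ι × κ) (ι × κ) ℂ) (Y : Matrix κ κ ℂ) :
    Matrix.trace (ρ * ((1 : Matrix ι ι ℂ) ⊗ₖ Y)) = Matrix.trace (ptr₁ ρ * Y) := by
  simp only [Matrix.trace, Matrix.diag, Matrix.mul_apply, ptr₁, Matrix.of_apply,
    Matrix.kroneckerMap_apply, Matrix.one_apply, Fintype.sum_prod_type, Finset.sum_mul,
    ite_mul, one_mul, zero_mul, mul_ite, mul_zero]
  have h1 : ∀ (i : ι) (k : κ),
      (∑ x2 : ι, ∑ x3 : κ, if x2 = i then ρ (i, k) (x2, x3) * Y x3 k else 0)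
        = ∑ x3 : κ, ρ (i, k) (i, x3) * Y x3 k := by
    intro i k
    rw [Finset.sum_comm]
    simp
  simp only [h1]
  rw [Finset.sum_comm]
  exact Finset.sum_congr rfl fun _ _ => Finset.sum_comm

lemma relEnt_eq_sub {n : Type*} [Fintype n] [DecidableEq n] (ρ σ : Matrix n n ℂ) :
    relEnt ρ σ = (Matrix.trace (ρ * matLog ρ)).re - (Matrix.trace (ρ * matLog σ)).re := by
  rw [relEnt, mul_sub, Matrix.trace_sub, Complex.sub_re]

end Aux

/-- Decomposition of the relative entropy to a product reference state:
`S(ρ ‖ σ_A ⊗ₖ σ_B) = S(ρ ‖ ρ_A ⊗ₖ ρ_B) + S(ρ_A ‖ σ_A) + S(ρ_B ‖ σ_B)`, the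
bipartite instance of the additivity relation `I = M + N`. -/
theorem relEnt_product_decomposition {ι κ : Type*} [Fintype ι] [Fintype κ]
    [DecidableEq ι] [DecidableEq κ] [Nonempty ι] [Nonempty κ]
    (ρ : Matrix (ι × κ) (ι × κ) ℂ) (hρ : ρ.PosDef)
    (hρ1 : Matrix.trace ρ = 1)
    (hρA : (ptr₂ ρ).PosDef) (hρB : (ptr₁ ρ).PosDef)
    (σA : Matrix ι ι ℂ) (σB : Matrix κ κ ℂ)
    (hσA : σA.PosDef) (hσB : σB.PosDef)
    (hσA1 : Matrix.trace σA = 1) (hσB1 : Matrix.trace σB = 1) :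
    relEnt ρ (σA ⊗ₖ σB) =
      relEnt ρ (ptr₂ ρ ⊗ₖ ptr₁ ρ) + relEnt (ptr₂ ρ) σA + relEnt (ptr₁ ρ) σB := by
  rw [relEnt_eq_sub, relEnt_eq_sub, relEnt_eq_sub, relEnt_eq_sub,
    matLog_kronecker σA σB hσA hσB, matLog_kronecker _ _ hρA hρB,
    mul_add, Matrix.trace_add, Complex.add_re, trace_mul_kron_one, trace_mul_one_kron,
    mul_add, Matrix.trace_add, Complex.add_re, trace_mul_kron_one, trace_mul_one_kron]
  ring
end
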